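/- Let φ be an expansive continuous flow on a compact metric space X. Then for every T > 0, the set of periodic orbits of φ with period at most T is finite. -/

import Mathlib

def IsRep (h : ℝ → ℝ) : Prop :=
  StrictMono h ∧ Function.Surjective h ∧ h 0 = 0

def IsExpansive {X : Type*} [MetricSpace X] (φ : ℝ → X → X) : Prop :=
  ∀ ε : ℝ, 0 < ε → ∃ δ : ℝ, 0 < δ ∧ ∀ x y : X, ∀ h : ℝ → ℝ, IsRep h →
    (∀ t : ℝ, dist (φ t x) (φ (h t) y) ≤ δ) →
    ∃ s : ℝ, |s| ≤ ε ∧ y = φ s x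

theorem expansive_finitely_many_short_periodic_orbits
    {X : Type*} [MetricSpace X] [CompactSpace X]
    (φ : ℝ → X → X)
    (hcont : Continuous fun p : ℝ × X => φ p.1 p.2)
    (h0 : ∀ x, φ 0 x = x)
    (hadd : ∀ t s : ℝ, ∀ x, φ (t + s) x = φ s (φ t x))
    (hexp : IsExpansive φ) (T : ℝ) (hT : 0 < T) :
    {O : Set X | ∃ (x : X) (p : ℝ), O = Set.range (fun t : ℝ => φ t x) ∧
      0 < p ∧ p ≤ T ∧ φ p x = x ∧
      ∀ q : ℝ, 0 < q → φ q x = x → p ≤ q}.Finite := by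
  classical
  obtain ⟨δ, hδ, hδspec⟩ := hexp 1 one_pos
  set K : Set (ℝ × X) := Set.Icc (-(T+1)) (T+1) ×ˢ Set.univ with hKdef
  have hKc : IsCompact K := isCompact_Icc.prod isCompact_univ
  have huc := hKc.uniformContinuousOn_of_continuous hcont.continuousOn
  rw [Metric.uniformContinuousOn_iff] at huc
  obtain ⟨η₀, hη₀, hη⟩ := huc (δ/2) (by linarith)
  set η : ℝ := min η₀ 1 with hηdef
  have hηpos : 0 < η := lt_min hη₀ one_pos
  have hη1 : η ≤ 1 := min_le_right _ _
  have hηη₀ : η ≤ η₀ := min_le_left _ _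
  have memK : ∀ t : ℝ, -(T+1) ≤ t → t ≤ T+1 → ∀ z : X, (t, z) ∈ K := by
    intro t h1 h2 z
    exact ⟨Set.mem_Icc.mpr ⟨h1, h2⟩, Set.mem_univ z⟩
  -- main claim: close base points with close periods ⇒ same orbit
  have main : ∀ (x : X) (p : ℝ) (y : X) (q : ℝ),
      0 < p → p ≤ T → φ p x = x → 0 < q → q ≤ T → φ q y = y →
      dist x y < η → |p - q| < η →
      Set.range (fun t : ℝ => φ t y) = Set.range (fun t : ℝ => φ t x) := by
    intro x p y q hp hpT hpx hq hqT hqy hxy hpq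
    set h : ℝ → ℝ := fun t => (q/p) * t with hhdef
    have hp' : p ≠ 0 := ne_of_gt hp
    have hqp : 0 < q / p := div_pos hq hp
    have hrep : IsRep h := by
      refine ⟨fun a b hab => ?_, fun r => ⟨(p/q)*r, ?_⟩, by show (q/p) * 0 = 0; ring⟩
      · show (q/p) * a < (q/p) * b
        nlinarith
      · show (q/p) * ((p/q)*r) = r
        field_simp
    have hFx : Function.Periodic (fun t : ℝ => φ t x) p := by
      intro s
      show φ (s + p) x = φ s x
      rw [add_comm, hadd, hpx]
    have hFy : Function.Periodic (fun t : ℝ => φ (h t) y) p := by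
      intro s
      have hh : h (s + p) = q + h s := by
        show (q/p) * (s + p) = q + (q/p) * s
        field_simp
        ring
      show φ (h (s + p)) y = φ (h s) y
      rw [hh, hadd, hqy]
    have key : ∀ t : ℝ, dist (φ t x) (φ (h t) y) ≤ δ := by
      have hper : Function.Periodic (fun t : ℝ => dist (φ t x) (φ (h t) y)) p := by
        intro s
        have e1 : φ (s + p) x = φ s x := hFx s
        have e2 : φ (h (s + p)) y = φ (h s) y := hFy s
        show dist (φ (s + p) x) (φ (h (s + p)) y) = dist (φ s x) (φ (h s) y)
        rw [e1, e2]
      intro t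
      obtain ⟨t₀, ht₀, heq⟩ := hper.exists_mem_Ico₀ hp t
      have heq' : dist (φ t x) (φ (h t) y) = dist (φ t₀ x) (φ (h t₀) y) := heq
      rw [heq']
      have ht0 : 0 ≤ t₀ := ht₀.1
      have ht0' : t₀ < p := ht₀.2
      have htT : t₀ ≤ T + 1 := by linarith
      have htT' : -(T+1) ≤ t₀ := by linarith
      have h1 : dist (φ t₀ x) (φ t₀ y) < δ/2 := by
        have := hη (t₀, x) (memK _ htT' htT x) (t₀, y) (memK _ htT' htT y) ?_
        · exact this
        · rw [Prod.dist_eq, dist_self]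
          exact max_lt hη₀ (lt_of_lt_of_le hxy hηη₀)
      have hs : |h t₀ - t₀| ≤ |p - q| := by
        have he : h t₀ - t₀ = (q - p) * (t₀ / p) := by
          show q / p * t₀ - t₀ = (q - p) * (t₀ / p); linear_combination t₀ * (div_self hp')
        rw [he, abs_mul]
        have h2 : |t₀/p| ≤ 1 := by
          rw [abs_of_nonneg (by positivity)]
          exact div_le_one_of_le₀ ht0'.le hp.le
        have h3 : |q - p| = |p - q| := abs_sub_comm q p
        nlinarith [abs_nonneg (q - p)]
      have hsη : |h t₀ - t₀| < η := lt_of_le_of_lt hs hpq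
      have h2 : dist (φ t₀ y) (φ (h t₀) y) < δ/2 := by
        have hrewrite : φ (h t₀) y = φ (h t₀ - t₀) (φ t₀ y) := by
          rw [← hadd]; ring_nf
        rw [hrewrite]
        have hfz : φ t₀ y = φ 0 (φ t₀ y) := (h0 _).symm
        have hm1 : ((0 : ℝ), φ t₀ y) ∈ K := memK 0 (by linarith) (by linarith) _
        have hm2 : ((h t₀ - t₀ : ℝ), φ t₀ y) ∈ K := by
          refine memK _ ?_ ?_ _ <;>
            · have := abs_le.mp (le_of_lt (lt_of_lt_of_le hsη hη1)); linarith [this.1, this.2]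
        have := hη (0, φ t₀ y) hm1 (h t₀ - t₀, φ t₀ y) hm2 ?_
        · calc dist (φ t₀ y) (φ (h t₀ - t₀) (φ t₀ y))
              = dist (φ 0 (φ t₀ y)) (φ (h t₀ - t₀) (φ t₀ y)) := by rw [← hfz]
            _ < δ/2 := this
        · rw [Prod.dist_eq, dist_self, Real.dist_eq]
          have hz : |(0:ℝ) - (h t₀ - t₀)| = |h t₀ - t₀| := by rw [zero_sub, abs_neg]
          rw [hz]
          exact max_lt (lt_of_lt_of_le hsη hηη₀) hη₀
      calc dist (φ t₀ x) (φ (h t₀) y)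
          ≤ dist (φ t₀ x) (φ t₀ y) + dist (φ t₀ y) (φ (h t₀) y) := dist_triangle _ _ _
        _ ≤ δ := by linarith
    obtain ⟨s, _, hs2⟩ := hδspec x y h hrep key
    ext z
    simp only [Set.mem_range]
    constructor
    · rintro ⟨t, rfl⟩
      exact ⟨s + t, by rw [hadd, ← hs2]⟩
    · rintro ⟨t, rfl⟩
      refine ⟨t - s, ?_⟩
      rw [hs2, ← hadd]
      ring_nf
  -- finiteness packaging
  set S := {O : Set X | ∃ (x : X) (p : ℝ), O = Set.range (fun t : ℝ => φ t x) ∧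
      0 < p ∧ p ≤ T ∧ φ p x = x ∧
      ∀ q : ℝ, 0 < q → φ q x = x → p ≤ q} with hSdef
  have hchoice : ∀ O : S, ∃ (x : X) (p : ℝ), (O : Set X) = Set.range (fun t : ℝ => φ t x) ∧
      0 < p ∧ p ≤ T ∧ φ p x = x ∧ ∀ q : ℝ, 0 < q → φ q x = x → p ≤ q := fun O => O.2
  choose xf pf hOeq hp0 hpT hper _ using hchoice
  -- compact target
  have hcomp : IsCompact ((Set.univ : Set X) ×ˢ Set.Icc 0 T) := isCompact_univ.prod isCompact_Icc
  obtain ⟨tset, htfin, htsub⟩ := (Metric.totallyBounded_iff.mp hcomp.totallyBounded) (η/2) (by linarith)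
  have hmem : ∀ O : S, ((xf O, pf O) : X × ℝ) ∈ ⋃ y ∈ tset, Metric.ball y (η/2) := by
    intro O
    exact htsub ⟨Set.mem_univ _, Set.mem_Icc.mpr ⟨(hp0 O).le, hpT O⟩⟩
  have hmem' : ∀ O : S, ∃ c ∈ tset, ((xf O, pf O) : X × ℝ) ∈ Metric.ball c (η/2) := by
    intro O
    simpa using hmem O
  choose cf hcf hball using hmem'
  have hinj : Function.Injective (fun O : S => (⟨cf O, hcf O⟩ : tset)) := by
    intro O O' hOO'
    have hceq : cf O = cf O' := congrArg Subtype.val hOO'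
    have hd : dist ((xf O, pf O) : X × ℝ) ((xf O', pf O') : X × ℝ) < η := by
      have d1 := Metric.mem_ball.mp (hball O)
      have d2 := Metric.mem_ball.mp (hball O')
      rw [hceq] at d1
      calc dist ((xf O, pf O) : X × ℝ) ((xf O', pf O') : X × ℝ)
          ≤ dist ((xf O, pf O) : X × ℝ) (cf O') + dist (cf O') ((xf O', pf O') : X × ℝ) :=
            dist_triangle _ _ _
        _ < η := by
            have d2' : dist (cf O') ((xf O', pf O') : X × ℝ) < η/2 := by
              rw [dist_comm]; exact d2
            linarith
    rw [Prod.dist_eq] at hd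
    have hdx : dist (xf O) (xf O') < η := lt_of_le_of_lt (le_max_left _ _) hd
    have hdp : |pf O - pf O'| < η := by
      have := lt_of_le_of_lt (le_max_right _ _) hd
      rwa [Real.dist_eq] at this
    have := main (xf O') (pf O') (xf O) (pf O) (hp0 O') (hpT O') (hper O')
      (hp0 O) (hpT O) (hper O) (by rwa [dist_comm]) (by rw [abs_sub_comm]; exact hdp)
    apply Subtype.ext
    rw [hOeq O, hOeq O', ← this]
  haveI : Finite tset := htfin.to_subtype
  haveI : Finite S := Finite.of_injective _ hinj
  exact Set.toFinite S
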